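/- If G is finite, N an abelian normal subgroup, and the map n ↦ n^{|G/N|} is an automorphism of N (e.g., gcd(|N|, |G/N|) = 1), then every compatible θ ∈ C₁ extends to an automorphism of G centralizing G/N, and every φ ∈ C₂ lifts to an automorphism of G centralizing N. -/

import Mathlib

namespace Stmt13Aux

variable {G : Type*} [Group G] (N : Subgroup G) [hN : N.Normal] (t : G ⧸ N → G)

def rho (x : G ⧸ N) (n : N) : N :=
  ⟨t x * n * (t x)⁻¹, hN.conj_mem _ n.2 _⟩

variable (ht : ∀ x : G ⧸ N, (QuotientGroup.mk (t x) : G ⧸ N) = x)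

def fcoc (x y : G ⧸ N) : N :=
  ⟨t x * t y * (t (x * y))⁻¹, by
    rw [← QuotientGroup.eq_one_iff]; simp [ht]⟩

def nPart (g : G) : N :=
  ⟨g * (t (QuotientGroup.mk g))⁻¹, by
    rw [← QuotientGroup.eq_one_iff]; simp [ht]⟩

@[simp] lemma rho_coe (x : G ⧸ N) (n : N) : (rho N t x n : G) = t x * n * (t x)⁻¹ := rfl

@[simp] lemma fcoc_coe (x y : G ⧸ N) : (fcoc N t ht x y : G) = t x * t y * (t (x * y))⁻¹ := rfl

@[simp] lemma nPart_coe (g : G) : (nPart N t ht g : G) = g * (t (QuotientGroup.mk g))⁻¹ := rfl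

lemma rho_mul (x : G ⧸ N) (a b : N) : rho N t x (a * b) = rho N t x a * rho N t x b := by
  ext; simp [mul_assoc]

lemma rho_one (x : G ⧸ N) : rho N t x 1 = 1 := by
  ext; simp

lemma rho_inv (x : G ⧸ N) (a : N) : rho N t x a⁻¹ = (rho N t x a)⁻¹ := by
  ext
  show t x * (a : G)⁻¹ * (t x)⁻¹ = (t x * (a : G) * (t x)⁻¹)⁻¹
  group

def rhoM (x : G ⧸ N) : N →* N where
  toFun := rho N t x
  map_one' := rho_one N t x
  map_mul' := rho_mul N t x

@[simp] lemma rhoM_apply (x : G ⧸ N) (n : N) : rhoM N t x n = rho N t x n := rfl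

lemma rho_cocycle (x y z : G ⧸ N) :
    rho N t x (fcoc N t ht y z) * fcoc N t ht x (y * z)
      = fcoc N t ht x y * fcoc N t ht (x * y) z := by
  ext
  simp only [Subgroup.coe_mul, rho_coe, fcoc_coe, ← mul_assoc]
  group

lemma mk_coe_one (n : N) : (QuotientGroup.mk (n : G) : G ⧸ N) = 1 :=
  (QuotientGroup.eq_one_iff _).mpr n.2

lemma decomp (g : G) : (nPart N t ht g : G) * t (QuotientGroup.mk g) = g := by
  rw [nPart_coe]; group

lemma nPart_mul (g h : G) :
    nPart N t ht (g * h)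
      = nPart N t ht g * rho N t (QuotientGroup.mk g) (nPart N t ht h)
          * fcoc N t ht (QuotientGroup.mk g) (QuotientGroup.mk h) := by
  ext
  simp only [Subgroup.coe_mul, nPart_coe, rho_coe, fcoc_coe, QuotientGroup.mk_mul]
  group

lemma fcoc_one_left (ht1 : t 1 = 1) (y : G ⧸ N) : fcoc N t ht 1 y = 1 := by
  ext; simp [ht1]

lemma nPart_coe_mem (ht1 : t 1 = 1) (n : N) : nPart N t ht (n : G) = n := by
  ext; simp [mk_coe_one, ht1]

lemma exists_cobound {H A : Type*} [Group H] [CommGroup A] [Fintype H]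
    (r : H → A →* A) (σ : A → A)
    (hσ1 : ∀ a, σ a ^ Fintype.card H = a) (hσ2 : ∀ a, σ (a ^ Fintype.card H) = a)
    (g : H → H → A)
    (hg : ∀ x y z, r x (g y z) * g x (y * z) = g x y * g (x * y) z) :
    ∃ c : H → A, (∀ x y, g x y = (r x (c y))⁻¹ * (c x)⁻¹ * c (x * y)) ∧
      ((∀ y, g 1 y = 1) → c 1 = 1) := by
  set m := Fintype.card H with hm
  have hpowinj : Function.Injective (fun a : A => a ^ m) := by
    intro a b hab
    have := congrArg σ hab
    simpa [hσ2] using this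
  have hσmul : ∀ a b, σ (a * b) = σ a * σ b := by
    intro a b
    apply hpowinj
    simp only [mul_pow, hσ1]
  have hσinv : ∀ a, σ a⁻¹ = (σ a)⁻¹ := by
    intro a
    apply hpowinj
    simp only [inv_pow, hσ1]
  have hσr : ∀ x a, σ (r x a) = r x (σ a) := by
    intro x a
    apply hpowinj
    simp only [← map_pow, hσ1]
  set e : H → A := fun x => ∏ z, g x z with he
  have key : ∀ x y, (g x y) ^ m = r x (e y) * e x * (e (x * y))⁻¹ := by
    intro x y
    have h1 : ∏ z, (r x (g y z) * g x (y * z)) = ∏ z, (g x y * g (x * y) z) := by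
      exact Finset.prod_congr rfl fun z _ => hg x y z
    rw [Finset.prod_mul_distrib, Finset.prod_mul_distrib, ← map_prod,
        Finset.prod_const, Finset.card_univ] at h1
    have h2 : (∏ z, g x (y * z)) = e x := by
      exact Fintype.prod_equiv (Equiv.mulLeft y) _ _ fun z => rfl
    rw [h2] at h1
    rw [eq_comm, mul_inv_eq_iff_eq_mul, hm]
    exact h1
  refine ⟨fun x => (σ (e x))⁻¹, fun x y => ?_, fun h1 => ?_⟩
  · have := congrArg σ (key x y)
    rw [hσ2, hσmul, hσmul, hσinv, hσr] at this
    rw [this, map_inv]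
    apply Additive.ofMul.injective
    simp only [ofMul_mul, ofMul_inv]
    abel
  · have he1 : e 1 = 1 := Finset.prod_eq_one fun z _ => h1 z
    show (σ (e 1))⁻¹ = 1
    rw [he1]
    have : σ (1 : A) = 1 := by
      apply hpowinj; simp only [hσ1, one_pow]
    rw [this, inv_one]

theorem main {G : Type*} [Group G] [Finite G] (N : Subgroup G) [N.Normal]
    (hcomm : ∀ a b : N, a * b = b * a)
    (t : G ⧸ N → G) (ht : ∀ x : G ⧸ N, (QuotientGroup.mk (t x) : G ⧸ N) = x)
    (ht1 : t 1 = 1)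
    (hbij : Function.Bijective (fun n : N => n ^ Nat.card (G ⧸ N)))
    (θ : N ≃* N) (ψ : (G ⧸ N) ≃* (G ⧸ N))
    (hθ : ∀ (x : G ⧸ N) (n : N), (θ (rho N t x n) : G) = t x * (θ n : G) * (t x)⁻¹)
    (hψ : ∀ (x : G ⧸ N) (n : N), rho N t (ψ x) n = rho N t x n) :
    ∃ γ : G ≃* G, (∀ n : N, γ n = (θ n : G)) ∧
      ∀ g : G, (QuotientGroup.mk (γ g) : G ⧸ N) = ψ (QuotientGroup.mk g) := by
  letI : Fintype (G ⧸ N) := Fintype.ofFinite _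
  letI : CommGroup ↥N := { (inferInstance : Group ↥N) with mul_comm := hcomm }
  have hθρ : ∀ (x : G ⧸ N) (n : N), θ (rho N t x n) = rho N t x (θ n) :=
    fun x n => Subtype.ext (hθ x n)
  -- σ
  let E : ↥N ≃ ↥N := Equiv.ofBijective _ hbij
  have hσ1 : ∀ a : ↥N, E.symm a ^ Fintype.card (G ⧸ N) = a := by
    intro a
    rw [← Nat.card_eq_fintype_card]
    exact E.apply_symm_apply a
  have hσ2 : ∀ a : ↥N, E.symm (a ^ Fintype.card (G ⧸ N)) = a := by
    intro a
    rw [← Nat.card_eq_fintype_card]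
    exact E.symm_apply_apply a
  -- the twisted 2-cocycle
  have hgc : ∀ x y z : G ⧸ N,
      rhoM N t x (θ (fcoc N t ht y z) * (fcoc N t ht (ψ y) (ψ z))⁻¹)
          * (θ (fcoc N t ht x (y*z)) * (fcoc N t ht (ψ x) (ψ (y*z)))⁻¹)
        = (θ (fcoc N t ht x y) * (fcoc N t ht (ψ x) (ψ y))⁻¹)
          * (θ (fcoc N t ht (x*y) z) * (fcoc N t ht (ψ (x*y)) (ψ z))⁻¹) := by
    intro x y z
    have A := congrArg θ (rho_cocycle N t ht x y z)
    rw [map_mul, map_mul, hθρ] at A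
    have B := rho_cocycle N t ht (ψ x) (ψ y) (ψ z)
    rw [show ψ x * ψ y = ψ (x*y) from (map_mul ψ x y).symm,
        show ψ y * ψ z = ψ (y*z) from (map_mul ψ y z).symm,
        hψ] at B
    rw [map_mul, map_inv, rhoM_apply, rhoM_apply]
    rw [mul_mul_mul_comm, ← mul_inv, A, B, mul_inv, mul_mul_mul_comm]
  obtain ⟨c, hc, hc1⟩ := exists_cobound (rhoM N t) E.symm hσ1 hσ2
      (fun x y => θ (fcoc N t ht x y) * (fcoc N t ht (ψ x) (ψ y))⁻¹) hgc
  have hc1' : c 1 = 1 := by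
    apply hc1
    intro y
    simp [map_one, fcoc_one_left N t ht ht1]
  -- the key N-level identity
  have NId : ∀ (x y : G ⧸ N) (a b : N),
      θ a * rho N t x (θ b) * θ (fcoc N t ht x y) * (c (x*y))⁻¹
        = θ a * (c x)⁻¹ * rho N t x (θ b * (c y)⁻¹) * fcoc N t ht (ψ x) (ψ y) := by
    intro x y a b
    have h := hc x y
    simp only [rhoM_apply] at h
    rw [mul_inv_eq_iff_eq_mul] at h
    rw [h, rho_mul, rho_inv]
    apply Additive.ofMul.injective
    simp only [ofMul_mul, ofMul_inv]
    abel
  -- the candidate map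
  set γ₀ : G → G := fun g =>
    (θ (nPart N t ht g) : G) * ((c (QuotientGroup.mk g) : N) : G)⁻¹
      * t (ψ (QuotientGroup.mk g)) with hγ₀def
  have hπγ : ∀ g : G, (QuotientGroup.mk (γ₀ g) : G ⧸ N) = ψ (QuotientGroup.mk g) := by
    intro g
    rw [hγ₀def]
    simp [mk_coe_one N, ht]
  have hγN : ∀ n : N, γ₀ (n : G) = (θ n : G) := by
    intro n
    rw [hγ₀def]
    simp only [nPart_coe_mem N t ht ht1, mk_coe_one N, map_one, hc1', ht1]
    simp
  have hγmul : ∀ g h : G, γ₀ (g * h) = γ₀ g * γ₀ h := by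
    intro g h
    set x := (QuotientGroup.mk g : G ⧸ N) with hxd
    set y := (QuotientGroup.mk h : G ⧸ N) with hyd
    have hmk : (QuotientGroup.mk (g*h) : G ⧸ N) = x * y := rfl
    have L : γ₀ (g*h)
        = ((θ (nPart N t ht g) * rho N t x (θ (nPart N t ht h)) * θ (fcoc N t ht x y)
            * (c (x*y))⁻¹ : N) : G) * t (ψ (x*y)) := by
      rw [hγ₀def]
      show (θ (nPart N t ht (g*h)) : G) * _ * _ = _
      rw [hmk, nPart_mul N t ht g h, ← hxd, ← hyd, map_mul, map_mul, hθρ]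
      simp only [Subgroup.coe_mul, InvMemClass.coe_inv, mul_assoc]
    have R : ((θ (nPart N t ht g) * (c x)⁻¹
            * rho N t x (θ (nPart N t ht h) * (c y)⁻¹)
            * fcoc N t ht (ψ x) (ψ y) : N) : G) * t (ψ x * ψ y)
        = γ₀ g * γ₀ h := by
      rw [hγ₀def, ← hψ x]
      simp only [Subgroup.coe_mul, InvMemClass.coe_inv, rho_coe, fcoc_coe]
      group
      rfl
    rw [L, ← R, show ψ x * ψ y = ψ (x*y) from (map_mul ψ x y).symm, NId]
  have hγinj : Function.Injective γ₀ := by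
    intro g h hgh
    have hq : (QuotientGroup.mk g : G ⧸ N) = QuotientGroup.mk h := by
      apply ψ.injective
      rw [← hπγ g, ← hπγ h, hgh]
    rw [hγ₀def] at hgh
    simp only at hgh
    rw [hq] at hgh
    have h2 : (θ (nPart N t ht g) : G) = θ (nPart N t ht h) :=
      mul_right_cancel (mul_right_cancel hgh)
    have h3 : nPart N t ht g = nPart N t ht h := θ.injective (Subtype.ext h2)
    rw [← decomp N t ht g, ← decomp N t ht h, hq, h3]
  have hbijγ : Function.Bijective γ₀ := ⟨hγinj, Finite.surjective_of_injective hγinj⟩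
  exact ⟨MulEquiv.ofBijective (MonoidHom.mk' γ₀ hγmul) hbijγ,
    fun n => hγN n, fun g => hπγ g⟩

end Stmt13Aux

/-- If G is finite, N abelian normal in G, and n ↦ n^{|G/N|} is an
automorphism of N (e.g. gcd(|N|,|G/N|) = 1), then every θ ∈ C₁ extends to an
automorphism of G centralizing G/N and every φ ∈ C₂ lifts to an automorphism of G
centralizing N. -/
theorem stmt_13 {G : Type*} [Group G] [Finite G] (N : Subgroup G) [N.Normal]
    (hcomm : ∀ a b : N, a * b = b * a)
    (t : G ⧸ N → G) (ht : ∀ x : G ⧸ N, (QuotientGroup.mk (t x) : G ⧸ N) = x)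
    (ht1 : t 1 = 1)
    (hbij : Function.Bijective (fun n : N => n ^ Nat.card (G ⧸ N))) :
    (∀ θ : N ≃* N,
      (∀ (n m : N) (x : G ⧸ N),
        (n : G) = (t x)⁻¹ * (m : G) * t x →
          (θ n : G) = (t x)⁻¹ * (θ m : G) * t x) →
      ∃ γ : G ≃* G,
        (∀ n : N, γ n = (θ n : G)) ∧
        (∀ g : G, (QuotientGroup.mk (γ g) : G ⧸ N) = QuotientGroup.mk g)) ∧
    (∀ φ : G ⧸ N ≃* G ⧸ N,
      (∀ (n : N) (x : G ⧸ N),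
        (t (φ x))⁻¹ * (n : G) * t (φ x) = (t x)⁻¹ * (n : G) * t x) →
      ∃ γ : G ≃* G,
        (∀ n ∈ N, γ n = n) ∧
        (∀ g : G, (QuotientGroup.mk (γ g) : G ⧸ N) = φ (QuotientGroup.mk g))) := by
  open Stmt13Aux in
  constructor
  · intro θ H1
    have hθ : ∀ (x : G ⧸ N) (n : N),
        (θ (Stmt13Aux.rho N t x n) : G) = t x * (θ n : G) * (t x)⁻¹ := by
      intro x n
      have h := H1 n (Stmt13Aux.rho N t x n) x (by rw [Stmt13Aux.rho_coe]; group)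
      rw [h]; group
    obtain ⟨γ, hγ1, hγ2⟩ := Stmt13Aux.main N hcomm t ht ht1 hbij θ (MulEquiv.refl _)
      hθ (fun x n => rfl)
    exact ⟨γ, hγ1, hγ2⟩
  · intro φ H2
    have hψ : ∀ (x : G ⧸ N) (n : N), Stmt13Aux.rho N t (φ x) n = Stmt13Aux.rho N t x n := by
      intro x n
      ext
      have h := H2 (Stmt13Aux.rho N t x n) x
      rw [Stmt13Aux.rho_coe] at h
      have h2 : (t (φ x))⁻¹ * (t x * (n : G) * (t x)⁻¹) * t (φ x) = (n : G) := by
        rw [h]; group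
      show t (φ x) * (n : G) * (t (φ x))⁻¹ = t x * (n : G) * (t x)⁻¹
      calc t (φ x) * (n : G) * (t (φ x))⁻¹
          = t (φ x) * ((t (φ x))⁻¹ * (t x * (n : G) * (t x)⁻¹) * t (φ x)) * (t (φ x))⁻¹ := by
            rw [h2]
        _ = t x * (n : G) * (t x)⁻¹ := by group
    obtain ⟨γ, hγ1, hγ2⟩ := Stmt13Aux.main N hcomm t ht ht1 hbij (MulEquiv.refl _) φ
      (fun x n => rfl) hψ
    exact ⟨γ, fun n hn => hγ1 ⟨n, hn⟩, hγ2⟩
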